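/- Suppose X is not ℙ-almost surely constant, β_c > 0 satisfies f(β_c) = 0, and β > β_c. Set θ_c = β_c/β. Then θ_c minimizes θ ↦ (1/θ)·log r(θ) over (0,∞): for all θ > 0, (1/θ_c)·log r(θ_c) ≤ (1/θ)·log r(θ). Moreover h_a(β) + (1/θ_c)·log r(θ_c) = (β/β_c)·h_a(β_c). -/

import Mathlib

open MeasureTheory Real

/-- The Laplace transform `λ_β = 𝔼[e^{-βX}]` of the conductance law. -/
noncomputable def lam {Ω : Type*} [MeasurableSpace Ω] (P : Measure Ω) (X : Ω → ℝ) (β : ℝ) : ℝ :=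
  ∫ ω, Real.exp (-β * X ω) ∂P

/-- The annealed critical point `h_a(β) = log(ℓ-1) + log λ_β`. -/
noncomputable def annealedCP {Ω : Type*} [MeasurableSpace Ω] (P : Measure Ω) (X : Ω → ℝ)
    (ℓ : ℕ) (β : ℝ) : ℝ :=
  Real.log ((ℓ : ℝ) - 1) + Real.log (lam P X β)

/-- The function `f(β) = h_a(β) + β·𝔼[X e^{-βX}]/λ_β  (= h_a(β) - β h_a'(β))`. -/
noncomputable def fDS {Ω : Type*} [MeasurableSpace Ω] (P : Measure Ω) (X : Ω → ℝ)
    (ℓ : ℕ) (β : ℝ) : ℝ :=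
  annealedCP P X ℓ β + β * (∫ ω, X ω * Real.exp (-β * X ω) ∂P) / lam P X β


/-- The fractional-moment rate `r(θ) = (ℓ-1)·𝔼[(e^{-βX}/((ℓ-1)λ_β))^θ]`. -/
noncomputable def rDS {Ω : Type*} [MeasurableSpace Ω] (P : Measure Ω) (X : Ω → ℝ)
    (ℓ : ℕ) (β θ : ℝ) : ℝ :=
  ((ℓ : ℝ) - 1) * ∫ ω, (Real.exp (-β * X ω) / (((ℓ : ℝ) - 1) * lam P X β)) ^ θ ∂P

section Aux
variable {Ω : Type*} [MeasurableSpace Ω] (P : Measure Ω) [IsProbabilityMeasure P] (X : Ω → ℝ)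

omit [IsProbabilityMeasure P] in
lemma int_X_exp (hX : Measurable X)
    (hInt : ∀ s : ℝ, Integrable (fun ω => Real.exp (-s * X ω)) P) (b : ℝ) :
    Integrable (fun ω => X ω * Real.exp (-b * X ω)) P := by
  refine ((hInt (b-1)).add (hInt (b+1))).mono'
    (hX.mul ((hX.const_mul (-b)).exp)).aestronglyMeasurable ?_
  filter_upwards with ω
  have hx : |X ω| ≤ Real.exp (X ω) + Real.exp (-X ω) := by
    rcases abs_cases (X ω) with ⟨h, _⟩ | ⟨h, _⟩ <;> rw [h]
    · nlinarith [Real.add_one_le_exp (X ω), Real.exp_pos (-X ω)]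
    · nlinarith [Real.add_one_le_exp (-X ω), Real.exp_pos (X ω)]
  have h2 := mul_le_mul_of_nonneg_right hx (Real.exp_pos (-b * X ω)).le
  calc ‖X ω * Real.exp (-b * X ω)‖ = |X ω| * Real.exp (-b * X ω) := by
        rw [norm_mul, Real.norm_eq_abs, Real.norm_eq_abs, abs_of_pos (Real.exp_pos _)]
    _ ≤ (Real.exp (X ω) + Real.exp (-X ω)) * Real.exp (-b * X ω) := h2
    _ = Real.exp (-(b-1) * X ω) + Real.exp (-(b+1) * X ω) := by
        rw [add_mul, ← Real.exp_add, ← Real.exp_add]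
        congr 2 <;> ring

/-- Jensen-type tangent-line bound for `s ↦ log λ_s` at the point `bc`. -/
lemma log_lam_tangent (hX : Measurable X)
    (hInt : ∀ s : ℝ, Integrable (fun ω => Real.exp (-s * X ω)) P) (bc s : ℝ) :
    Real.log (lam P X bc) - (s - bc) * (∫ ω, X ω * Real.exp (-bc * X ω) ∂P) / lam P X bc
      ≤ Real.log (lam P X s) := by
  set I := ∫ ω, X ω * Real.exp (-bc * X ω) ∂P with hI
  have hlc : 0 < lam P X bc := integral_exp_pos (hInt bc)
  have hls : 0 < lam P X s := integral_exp_pos (hInt s)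
  set m : ℝ := -((s - bc) * I) / lam P X bc with hm
  have hint1 : Integrable (fun ω => (1 - m) * Real.exp (-bc * X ω)) P := (hInt bc).const_mul _
  have hint2 : Integrable (fun ω => (s - bc) * (X ω * Real.exp (-bc * X ω))) P :=
    (int_X_exp P X hX hInt bc).const_mul _
  have key : Real.exp m * lam P X bc ≤ lam P X s := by
    have hmono : ∀ ω, Real.exp m * ((1 - m) * Real.exp (-bc * X ω)
        - (s - bc) * (X ω * Real.exp (-bc * X ω))) ≤ Real.exp (-s * X ω) := by
      intro ω
      have h1 : (-(s - bc) * X ω - m) + 1 ≤ Real.exp (-(s - bc) * X ω - m) :=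
        Real.add_one_le_exp _
      have h2 : Real.exp m * ((-(s - bc) * X ω - m) + 1) ≤ Real.exp (-(s - bc) * X ω) := by
        calc Real.exp m * ((-(s - bc) * X ω - m) + 1)
            ≤ Real.exp m * Real.exp (-(s - bc) * X ω - m) :=
              mul_le_mul_of_nonneg_left h1 (Real.exp_pos m).le
          _ = Real.exp (-(s - bc) * X ω) := by rw [← Real.exp_add]; congr 1; ring
      have h3 := mul_le_mul_of_nonneg_right h2 (Real.exp_pos (-bc * X ω)).le
      calc Real.exp m * ((1 - m) * Real.exp (-bc * X ω)
            - (s - bc) * (X ω * Real.exp (-bc * X ω)))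
          = Real.exp m * ((-(s - bc) * X ω - m) + 1) * Real.exp (-bc * X ω) := by ring
        _ ≤ Real.exp (-(s - bc) * X ω) * Real.exp (-bc * X ω) := h3
        _ = Real.exp (-s * X ω) := by rw [← Real.exp_add]; congr 1; ring
    have hIle : ∫ ω, Real.exp m * ((1 - m) * Real.exp (-bc * X ω)
        - (s - bc) * (X ω * Real.exp (-bc * X ω))) ∂P ≤ lam P X s :=
      integral_mono ((hint1.sub hint2).const_mul _) (hInt s) hmono
    have hcalc : ∫ ω, Real.exp m * ((1 - m) * Real.exp (-bc * X ω)
        - (s - bc) * (X ω * Real.exp (-bc * X ω))) ∂P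
        = Real.exp m * ((1 - m) * lam P X bc - (s - bc) * I) := by
      rw [integral_const_mul, integral_sub hint1 hint2, integral_const_mul, integral_const_mul]
      rfl
    have hring : (1 - m) * lam P X bc - (s - bc) * I = lam P X bc := by
      rw [hm]; field_simp; ring
    rw [hcalc, hring] at hIle
    exact hIle
  have hlog := Real.log_le_log (by positivity) key
  rw [Real.log_mul (Real.exp_pos m).ne' hlc.ne', Real.log_exp] at hlog
  have : m = -((s - bc) * I / lam P X bc) := by rw [hm]; ring
  linarith [this ▸ hlog]

/-- The identity `log r(θ) = h_a(θβ) - θ h_a(β)`. -/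
lemma log_rDS (hInt : ∀ s : ℝ, Integrable (fun ω => Real.exp (-s * X ω)) P)
    (ℓ : ℕ) (hℓ : 3 ≤ ℓ) (β θ : ℝ) :
    Real.log (rDS P X ℓ β θ) = annealedCP P X ℓ (θ * β) - θ * annealedCP P X ℓ β := by
  have hl1 : (0:ℝ) < (ℓ : ℝ) - 1 := by
    have : (3:ℝ) ≤ (ℓ : ℝ) := by exact_mod_cast hℓ
    linarith
  have hlb : 0 < lam P X β := integral_exp_pos (hInt β)
  have hltb : 0 < lam P X (θ * β) := integral_exp_pos (hInt (θ * β))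
  have hc : 0 < ((ℓ : ℝ) - 1) * lam P X β := mul_pos hl1 hlb
  have hptwise : ∀ ω, (Real.exp (-β * X ω) / (((ℓ : ℝ) - 1) * lam P X β)) ^ θ
      = Real.exp (-(θ * β) * X ω) / (((ℓ : ℝ) - 1) * lam P X β) ^ θ := by
    intro ω
    rw [Real.div_rpow (Real.exp_pos _).le hc.le, ← Real.exp_mul]
    congr 2
    ring
  have hr : rDS P X ℓ β θ
      = ((ℓ : ℝ) - 1) * (lam P X (θ * β) / (((ℓ : ℝ) - 1) * lam P X β) ^ θ) := by
    unfold rDS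
    rw [show (fun ω => (Real.exp (-β * X ω) / (((ℓ : ℝ) - 1) * lam P X β)) ^ θ)
        = fun ω => Real.exp (-(θ * β) * X ω) / (((ℓ : ℝ) - 1) * lam P X β) ^ θ from
        funext hptwise, integral_div]
    rfl
  have hcθ : 0 < (((ℓ : ℝ) - 1) * lam P X β) ^ θ := Real.rpow_pos_of_pos hc θ
  rw [hr, Real.log_mul hl1.ne' (by positivity), Real.log_div hltb.ne' hcθ.ne',
    Real.log_rpow hc, Real.log_mul hl1.ne' hlb.ne']
  unfold annealedCP
  ring

end Aux

/-- In the strong disorder regime `β > β_c` (where `f(β_c) = 0`), `θ_c = β_c/β` minimizes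
`θ ↦ (1/θ)·log r(θ)` over `(0,∞)`, and `h_a(β) + (1/θ_c)·log r(θ_c) = (β/β_c)·h_a(β_c)`. -/
theorem thetac_minimizes {Ω : Type*} [MeasurableSpace Ω] (P : Measure Ω)
    [IsProbabilityMeasure P] (X : Ω → ℝ) (hX : Measurable X)
    (hInt : ∀ s : ℝ, Integrable (fun ω => Real.exp (-s * X ω)) P)
    (ℓ : ℕ) (hℓ : 3 ≤ ℓ)
    (hconst : ¬ ∃ c : ℝ, ∀ᵐ ω ∂P, X ω = c)
    (βc β : ℝ) (hβc : 0 < βc) (hfβc : fDS P X ℓ βc = 0) (hβ : βc < β) :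
    (∀ θ : ℝ, 0 < θ →
      (1 / (βc / β)) * Real.log (rDS P X ℓ β (βc / β)) ≤ (1 / θ) * Real.log (rDS P X ℓ β θ)) ∧
    annealedCP P X ℓ β + (1 / (βc / β)) * Real.log (rDS P X ℓ β (βc / β))
      = (β / βc) * annealedCP P X ℓ βc := by
  have hβ0 : 0 < β := hβc.trans hβ
  have hβne : β ≠ 0 := hβ0.ne'
  have hβcne : βc ≠ 0 := hβc.ne'
  set I := ∫ ω, X ω * Real.exp (-βc * X ω) ∂P with hI
  have hlc : 0 < lam P X βc := integral_exp_pos (hInt βc)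
  set D : ℝ := -(I / lam P X βc) with hD
  -- `f(βc) = 0` means `annealedCP βc = βc * D`
  have hAc : annealedCP P X ℓ βc = βc * D := by
    have h0 : annealedCP P X ℓ βc + βc * I / lam P X βc = 0 := hfβc
    have h1 : βc * I / lam P X βc = -(βc * D) := by rw [hD]; ring
    linear_combination h0 - h1
  -- tangent-line bound: `s * D ≤ annealedCP s` for all s
  have hmin : ∀ s : ℝ, s * D ≤ annealedCP P X ℓ s := by
    intro s
    have htan := log_lam_tangent P X hX hInt βc s
    have h1 : (s - βc) * I / lam P X βc = -((s - βc) * D) := by rw [hD]; ring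
    rw [h1] at htan
    have h2 : annealedCP P X ℓ βc + (s - βc) * D ≤ annealedCP P X ℓ s := by
      unfold annealedCP
      linarith
    rw [hAc] at h2
    calc s * D = βc * D + (s - βc) * D := by ring
      _ ≤ annealedCP P X ℓ s := h2
  have hlog := log_rDS P X hInt ℓ hℓ β
  have hθcβ : βc / β * β = βc := div_mul_cancel₀ βc hβne
  constructor
  · intro θ hθ
    have hθne : θ ≠ 0 := hθ.ne'
    rw [hlog θ, hlog (βc / β), hθcβ, hAc]
    have hL : 1 / (βc / β) * (βc * D - βc / β * annealedCP P X ℓ β)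
        = β * D - annealedCP P X ℓ β := by
      first
      | (field_simp; ring)
      | field_simp
    rw [hL]
    have h4 := hmin (θ * β)
    have h5 : β * D ≤ 1 / θ * annealedCP P X ℓ (θ * β) := by
      have h6 := mul_le_mul_of_nonneg_left h4 (le_of_lt (one_div_pos.mpr hθ))
      calc β * D = 1 / θ * (θ * β * D) := by
            first
            | (field_simp; ring)
            | field_simp
        _ ≤ 1 / θ * annealedCP P X ℓ (θ * β) := h6
    have h7 : 1 / θ * (annealedCP P X ℓ (θ * β) - θ * annealedCP P X ℓ β)
        = 1 / θ * annealedCP P X ℓ (θ * β) - annealedCP P X ℓ β := by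
      first
      | (field_simp; ring)
      | field_simp
    rw [h7]
    linarith
  · rw [hlog (βc / β), hθcβ, hAc]
    first
    | (field_simp; ring)
    | field_simp
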